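/- If a set-cover style dynamic program maintains, for each size j ≤ k, a q-representative family of its partial solutions, then correctness is preserved: specifically, if for each X in S there exists X̂ in Ŝ with X̂ ∩ Y = ∅ whenever |X ∪ Y| ≤ k, and similarly T̂ represents T, then the family {X̂ ∪ {e} : X̂ ∈ Ŝ, e ∉ X̂} ∪ T̂ represents {X ∪ {e} : X ∈ S, e ∉ X} ∪ T. -/
import Mathlib


/-- `A` represents `B` (unweighted): `A ⊆ B` and for every `X ∈ B` and every `Y`
disjoint from `X` with `|X ∪ Y| ≤ k`, some `X' ∈ A` is disjoint from `Y`. -/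
def Represents {E : Type*} [DecidableEq E] (k : ℕ) (A B : Finset (Finset E)) : Prop :=
  A ⊆ B ∧ ∀ X ∈ B, ∀ Y : Finset E, Disjoint X Y → (X ∪ Y).card ≤ k →
    ∃ X' ∈ A, X' ∩ Y = ∅

theorem stmt12 {E : Type*} [DecidableEq E] [Fintype E] (k p : ℕ) (hk : 1 ≤ k) (e : E)
    (S T Shat That : Finset (Finset E))
    (hSp : ∀ X ∈ S, X.card = p) (hTp : ∀ X ∈ T, X.card = p + 1)
    (h1 : Represents k Shat S) (h2 : Represents k That T) :
    Represents k
      (((Shat.filter (fun X => e ∉ X)).image (fun X => insert e X)) ∪ That)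
      (((S.filter (fun X => e ∉ X)).image (fun X => insert e X)) ∪ T) := by
  obtain ⟨hsub1, hrep1⟩ := h1
  obtain ⟨hsub2, hrep2⟩ := h2
  constructor
  · intro A hA
    rw [Finset.mem_union] at hA ⊢
    rcases hA with hA | hA
    · left
      simp only [Finset.mem_image, Finset.mem_filter] at hA ⊢
      obtain ⟨X, ⟨hX, he⟩, rfl⟩ := hA
      exact ⟨X, ⟨hsub1 hX, he⟩, rfl⟩
    · right; exact hsub2 hA
  · intro X hX Y hdisj hcard
    rw [Finset.mem_union] at hX
    rcases hX with hX | hX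
    · simp only [Finset.mem_image, Finset.mem_filter] at hX
      obtain ⟨X₀, ⟨hX₀, he⟩, rfl⟩ := hX
      have heY : e ∉ Y := fun h => (Finset.disjoint_left.mp hdisj (Finset.mem_insert_self e X₀)) h
      have hdisj' : Disjoint X₀ (insert e Y) := by
        rw [Finset.disjoint_insert_right]
        exact ⟨he, hdisj.mono_left (Finset.subset_insert e X₀)⟩
      have hU : X₀ ∪ insert e Y = insert e X₀ ∪ Y := by
        rw [Finset.union_insert, Finset.insert_union]
      obtain ⟨X', hX', hXY⟩ := hrep1 X₀ hX₀ (insert e Y) hdisj' (by rwa [hU])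
      have heX' : e ∉ X' := by
        intro h
        have : e ∈ X' ∩ insert e Y := Finset.mem_inter.mpr ⟨h, Finset.mem_insert_self e Y⟩
        rw [hXY] at this; exact absurd this (Finset.notMem_empty e)
      refine ⟨insert e X', ?_, ?_⟩
      · rw [Finset.mem_union]; left
        simp only [Finset.mem_image, Finset.mem_filter]
        exact ⟨X', ⟨hX', heX'⟩, rfl⟩
      · ext x
        simp only [Finset.mem_inter, Finset.mem_insert, Finset.notMem_empty, iff_false]
        rintro ⟨rfl | hx, hxY⟩
        · exact heY hxY
        · have : x ∈ X' ∩ insert e Y :=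
            Finset.mem_inter.mpr ⟨hx, Finset.mem_insert_of_mem hxY⟩
          rw [hXY] at this; exact Finset.notMem_empty x this
    · obtain ⟨X', hX', hXY⟩ := hrep2 X hX Y hdisj hcard
      exact ⟨X', Finset.mem_union_right _ hX', hXY⟩
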